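/- arXiv:2303.16478 — 2 statements merged into one kernel-verified Lean document; each statement's English description precedes it below -/
import Mathlib

section
/- Let n ≥ 2 be even and let R = Z₂[a,b]/(a^{n+1}, b²) be graded with deg a = deg b = m for some m ≥ 1. Then every degree-preserving Z₂-algebra automorphism of R is the identity. (Indeed, the three nonzero elements a, b, a+b of degree m have pairwise distinct nilpotency indices n+1, 2 and n+2, so any graded automorphism fixes each of them.) -/
open MvPolynomial

/-- The ring `Z₂[a,b]/(a^{n+1}, b²)`. -/
noncomputable abbrev PSRing (n : ℕ) : Type :=
  MvPolynomial (Fin 2) (ZMod 2) ⧸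
    (Ideal.span {(X 0 : MvPolynomial (Fin 2) (ZMod 2)) ^ (n + 1), (X 1) ^ 2})

/-- The class `a` in `Z₂[a,b]/(a^{n+1}, b²)`. -/
noncomputable def aCl (n : ℕ) : PSRing n := Ideal.Quotient.mk _ (X 0)

/-- The class `b` in `Z₂[a,b]/(a^{n+1}, b²)`. -/
noncomputable def bCl (n : ℕ) : PSRing n := Ideal.Quotient.mk _ (X 1)

/-- The degree-`k` piece of `Z₂[a,b]/(a^{n+1}, b²)` for the grading with
`deg a = deg b = m`: the `ℤ₂`-span of the monomials `aⁱbʲ` with `m(i+j) = k`. -/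
noncomputable def psPiece (n m k : ℕ) : Set (PSRing n) :=
  ↑(Submodule.span (ZMod 2)
    {r : PSRing n | ∃ i j : ℕ, m * (i + j) = k ∧ r = aCl n ^ i * bCl n ^ j})

/-- A degree-preserving (`ℤ₂`-algebra) automorphism of `Z₂[a,b]/(a^{n+1}, b²)` for the
grading with `deg a = deg b = m`. -/
def IsGradedAut (n m : ℕ) (φ : PSRing n ≃+* PSRing n) : Prop :=
  ∀ k : ℕ, φ '' psPiece n m k = psPiece n m k

-- ===== auxiliary development =====

/-- The root in `Z₂[x]/(x^{n+1})`. -/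
noncomputable def psRoot (n : ℕ) : AdjoinRoot ((Polynomial.X : Polynomial (ZMod 2)) ^ (n + 1)) :=
  AdjoinRoot.root _

/-- Evaluation of `Z₂[a,b]` into the dual numbers over `Z₂[x]/(x^{n+1})`, sending
`a ↦ x`, `b ↦ ε`. -/
noncomputable def psG (n : ℕ) :
    MvPolynomial (Fin 2) (ZMod 2) →+*
      DualNumber (AdjoinRoot ((Polynomial.X : Polynomial (ZMod 2)) ^ (n + 1))) :=
  (MvPolynomial.aeval ![TrivSqZeroExt.inl (psRoot n), DualNumber.eps]).toRingHom

lemma psRoot_pow_succ (n : ℕ) : psRoot n ^ (n + 1) = 0 := by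
  have h : psRoot n ^ (n + 1) =
      AdjoinRoot.mk _ ((Polynomial.X : Polynomial (ZMod 2)) ^ (n + 1)) := by
    rw [map_pow, AdjoinRoot.mk_X]; rfl
  rw [h, AdjoinRoot.mk_self]

lemma psRoot_pow_ne (n i : ℕ) (hi : i ≤ n) : psRoot n ^ i ≠ 0 := by
  have h : psRoot n ^ i = AdjoinRoot.mk _ ((Polynomial.X : Polynomial (ZMod 2)) ^ i) := by
    rw [map_pow, AdjoinRoot.mk_X]; rfl
  rw [h, Ne, AdjoinRoot.mk_eq_zero]
  intro hdvd
  have := Polynomial.natDegree_le_of_dvd hdvd (pow_ne_zero _ Polynomial.X_ne_zero)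
  simp [Polynomial.natDegree_X_pow] at this
  omega

lemma psG_ker (n : ℕ) :
    Ideal.span {(X 0 : MvPolynomial (Fin 2) (ZMod 2)) ^ (n + 1), (X 1) ^ 2} ≤
      RingHom.ker (psG n) := by
  rw [Ideal.span_le]
  rintro r (rfl | rfl) <;> rw [SetLike.mem_coe, RingHom.mem_ker]
  · show (MvPolynomial.aeval ![TrivSqZeroExt.inl (psRoot n), DualNumber.eps]) _ = 0
    rw [map_pow, MvPolynomial.aeval_X]
    show TrivSqZeroExt.inl (psRoot n) ^ (n + 1) = 0
    rw [TrivSqZeroExt.inl_pow, psRoot_pow_succ]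
    exact TrivSqZeroExt.inl_zero _
  · show (MvPolynomial.aeval ![TrivSqZeroExt.inl (psRoot n), DualNumber.eps]) _ = 0
    rw [map_pow, MvPolynomial.aeval_X]
    simpa [sq] using DualNumber.eps_mul_eps

/-- The induced map on the quotient. -/
noncomputable def psF (n : ℕ) :
    PSRing n →+*
      DualNumber (AdjoinRoot ((Polynomial.X : Polynomial (ZMod 2)) ^ (n + 1))) :=
  Ideal.Quotient.lift _ (psG n) (fun a ha => psG_ker n ha)

lemma psF_a (n : ℕ) : psF n (aCl n) = TrivSqZeroExt.inl (psRoot n) := by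
  simp [psF, aCl, psG, Ideal.Quotient.lift_mk]

lemma psF_b (n : ℕ) : psF n (bCl n) = DualNumber.eps := by
  simp [psF, bCl, psG, Ideal.Quotient.lift_mk]

lemma aCl_pow_ne (n i : ℕ) (hi : i ≤ n) : aCl n ^ i ≠ 0 := by
  intro h
  have h2 : psF n (aCl n ^ i) = 0 := by rw [h, map_zero]
  rw [map_pow, psF_a, TrivSqZeroExt.inl_pow] at h2
  exact psRoot_pow_ne n i hi (TrivSqZeroExt.inl_injective (by simpa using h2))

lemma aCl_ne (n : ℕ) (hn : 1 ≤ n) : aCl n ≠ 0 := by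
  intro h
  exact aCl_pow_ne n 1 hn (by rw [pow_one]; exact h)

lemma bCl_ne (n : ℕ) : bCl n ≠ 0 := by
  intro h
  have h2 : psF n (bCl n) = 0 := by rw [h, map_zero]
  rw [psF_b] at h2
  have h3 : (1 : AdjoinRoot ((Polynomial.X : Polynomial (ZMod 2)) ^ (n + 1))) = 0 := by
    have := TrivSqZeroExt.inr_injective (M := AdjoinRoot ((Polynomial.X : Polynomial (ZMod 2)) ^ (n + 1))) (R := AdjoinRoot ((Polynomial.X : Polynomial (ZMod 2)) ^ (n + 1)))
    apply this
    rw [TrivSqZeroExt.inr_zero]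
    exact h2
  rw [← map_one (AdjoinRoot.mk _), AdjoinRoot.mk_eq_zero] at h3
  have := Polynomial.natDegree_le_of_dvd h3 one_ne_zero
  simp [Polynomial.natDegree_X_pow] at this

lemma anb_ne (n : ℕ) : aCl n ^ n * bCl n ≠ 0 := by
  intro h
  have h2 : psF n (aCl n ^ n * bCl n) = 0 := by rw [h, map_zero]
  rw [map_mul, map_pow, psF_a, psF_b, TrivSqZeroExt.inl_pow] at h2
  have h3 : TrivSqZeroExt.inr (psRoot n ^ n) =
      (0 : DualNumber (AdjoinRoot ((Polynomial.X : Polynomial (ZMod 2)) ^ (n + 1)))) := by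
    rw [← h2]
    show _ = TrivSqZeroExt.inl _ * TrivSqZeroExt.inr 1
    rw [TrivSqZeroExt.inl_mul_inr, smul_eq_mul, mul_one]
  exact psRoot_pow_ne n n le_rfl
    (TrivSqZeroExt.inr_injective (h3.trans (TrivSqZeroExt.inr_zero _).symm))

lemma aCl_pow_succ (n : ℕ) : aCl n ^ (n + 1) = 0 := by
  rw [aCl, ← map_pow, Ideal.Quotient.eq_zero_iff_mem]
  exact Ideal.subset_span (by simp)

lemma bCl_sq (n : ℕ) : bCl n ^ 2 = 0 := by
  rw [bCl, ← map_pow, Ideal.Quotient.eq_zero_iff_mem]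
  exact Ideal.subset_span (by simp)

lemma ps_two (n : ℕ) : (2 : PSRing n) = 0 := by
  have h : (2 : PSRing n) = algebraMap (ZMod 2) (PSRing n) 2 := (map_ofNat _ 2).symm
  rw [h, show (2 : ZMod 2) = 0 from rfl, map_zero]

/-- Let `n ≥ 2` be even and grade `R = Z₂[a,b]/(a^{n+1}, b²)` by
`deg a = deg b = m` (`m ≥ 1`).  Then every degree-preserving `ℤ₂`-algebra automorphism
of `R` is the identity. -/
theorem gradedAut_eq_id_of_even (n m : ℕ) (hn : 2 ≤ n) (hne : Even n) (hm : 1 ≤ m) :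
    ∀ φ : PSRing n ≃+* PSRing n, IsGradedAut n m φ → φ = RingEquiv.refl (PSRing n) := by
  intro φ hφ
  set a := aCl n with ha
  set b := bCl n with hb
  -- degree-m piece description
  have hSgen : {r : PSRing n | ∃ i j : ℕ, m * (i + j) = m ∧ r = a ^ i * b ^ j} =
      ({a, b} : Set (PSRing n)) := by
    ext r
    constructor
    · rintro ⟨i, j, hij, rfl⟩
      have h1 : i + j = 1 := by
        have : m * (i + j) = m * 1 := by simpa using hij
        exact Nat.eq_of_mul_eq_mul_left (by omega) this
      rcases (show (i = 1 ∧ j = 0) ∨ (i = 0 ∧ j = 1) by omega) with ⟨rfl, rfl⟩ | ⟨rfl, rfl⟩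
      · simp
      · simp
    · rintro (rfl | rfl)
      · exact ⟨1, 0, by omega, by simp⟩
      · exact ⟨0, 1, by omega, by simp⟩
  have hmem : ∀ x ∈ psPiece n m m, x = 0 ∨ x = a ∨ x = b ∨ x = a + b := by
    intro x hx
    rw [psPiece, hSgen, SetLike.mem_coe, Submodule.mem_span_pair] at hx
    obtain ⟨c, d, hcd⟩ := hx
    rcases (by decide : ∀ c : ZMod 2, c = 0 ∨ c = 1) c with rfl | rfl <;>
      rcases (by decide : ∀ c : ZMod 2, c = 0 ∨ c = 1) d with rfl | rfl <;>
      simp only [zero_smul, one_smul, add_zero, zero_add] at hcd <;> tauto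
  have haS : a ∈ psPiece n m m := by
    rw [psPiece, hSgen]; exact Submodule.subset_span (by simp)
  have hbS : b ∈ psPiece n m m := by
    rw [psPiece, hSgen]; exact Submodule.subset_span (by simp)
  have himg : ∀ x ∈ psPiece n m m, φ x ∈ psPiece n m m := by
    intro x hx; rw [← hφ m]; exact ⟨x, hx, rfl⟩
  have hinj := φ.injective
  -- nilpotency computations
  have hsq : (a + b) ^ 2 = a ^ 2 := by
    have h1 : (a + b) ^ 2 = a ^ 2 + 2 * (a * b) + b ^ 2 := by ring
    rw [h1, bCl_sq, ps_two]; ring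
  obtain ⟨t, ht⟩ := hne
  have habn : (a + b) ^ n = a ^ n := by
    have h1 : (a + b) ^ n = ((a + b) ^ 2) ^ t := by rw [← pow_mul]; congr 1; omega
    have h2 : (a ^ 2) ^ t = a ^ n := by rw [← pow_mul]; congr 1; omega
    rw [h1, hsq, h2]
  have habn1 : (a + b) ^ (n + 1) = a ^ n * b := by
    rw [pow_succ, habn, mul_add, ← pow_succ, aCl_pow_succ, zero_add]
  -- φ fixes a
  have hφa : φ a = a := by
    rcases hmem _ (himg _ haS) with h | h | h | h
    · exact absurd (hinj (h.trans (map_zero φ).symm)) (aCl_ne n (by omega))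
    · exact h
    · exfalso
      have h2 : φ (a ^ 2) = 0 := by rw [map_pow, h, bCl_sq]
      exact aCl_pow_ne n 2 hn (hinj (h2.trans (map_zero φ).symm))
    · exfalso
      apply anb_ne n
      rw [← habn1, ← h, ← map_pow, aCl_pow_succ, map_zero]
  -- φ fixes b
  have hφb : φ b = b := by
    rcases hmem _ (himg _ hbS) with h | h | h | h
    · exact absurd (hinj (h.trans (map_zero φ).symm)) (bCl_ne n)
    · exfalso
      have h2 : a ^ 2 = 0 := by rw [← h, ← map_pow, bCl_sq, map_zero]
      exact aCl_pow_ne n 2 hn h2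
    · exact h
    · exfalso
      have h2 : a ^ 2 = 0 := by rw [← hsq, ← h, ← map_pow, bCl_sq, map_zero]
      exact aCl_pow_ne n 2 hn h2
  -- conclude
  have hhom : (φ : PSRing n →+* PSRing n) = RingHom.id (PSRing n) := by
    apply Ideal.Quotient.ringHom_ext
    apply MvPolynomial.ringHom_ext
    · intro r
      have h := RingHom.ext_zmod
        (((φ : PSRing n →+* PSRing n).comp (Ideal.Quotient.mk _)).comp MvPolynomial.C)
        (((RingHom.id (PSRing n)).comp (Ideal.Quotient.mk _)).comp MvPolynomial.C)
      exact RingHom.congr_fun h r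
    · intro i
      fin_cases i
      · simpa [ha, aCl] using hφa
      · simpa [hb, bCl] using hφb
  exact RingEquiv.ext fun x => RingHom.congr_fun hhom x
end

section
/- Let n ≥ 3 be odd and let R = Z₂[a,b]/(a^{n+1}, b²) be graded with deg a = deg b = m for some m ≥ 1. Then R has exactly two degree-preserving Z₂-algebra automorphisms: the identity, and the automorphism determined by a ↦ a + b, b ↦ b. (The elements a and a+b both have nilpotency index n+1 while b has nilpotency index 2, so a graded automorphism either fixes a and b or swaps a with a+b while fixing b.) -/
open MvPolynomial

namespace PSAux

noncomputable def PI (n : ℕ) : Ideal (MvPolynomial (Fin 2) (ZMod 2)) :=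
  Ideal.span {(X 0 : MvPolynomial (Fin 2) (ZMod 2)) ^ (n + 1), (X 1) ^ 2}

lemma b_sq (n : ℕ) : bCl n ^ 2 = 0 := by
  rw [bCl, ← map_pow, Ideal.Quotient.eq_zero_iff_mem]
  exact Ideal.subset_span (by simp)

lemma a_pow (n : ℕ) : aCl n ^ (n + 1) = 0 := by
  show (Ideal.Quotient.mk (PI n)) (X 0) ^ (n + 1) = 0
  rw [← map_pow, Ideal.Quotient.eq_zero_iff_mem]
  exact Ideal.subset_span (by simp)

lemma two_zero (n : ℕ) : (2 : PSRing n) = 0 := by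
  have h2 : (2 : ZMod 2) = 0 := rfl
  calc (2 : PSRing n) = algebraMap (ZMod 2) (PSRing n) 2 := (map_ofNat _ 2).symm
    _ = 0 := by rw [h2, map_zero]

lemma add_sq' (n : ℕ) (x y : PSRing n) : (x + y) ^ 2 = x ^ 2 + y ^ 2 := by
  have h := two_zero n
  have : (x + y) ^ 2 = x ^ 2 + 2 * (x * y) + y ^ 2 := by ring
  rw [this, h, zero_mul, add_zero]

lemma ab_sq (n : ℕ) : (aCl n + bCl n) ^ 2 = aCl n ^ 2 := by
  rw [add_sq', b_sq, add_zero]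

lemma ab_pow (n : ℕ) (hno : Odd n) : (aCl n + bCl n) ^ (n + 1) = 0 := by
  obtain ⟨k, hk⟩ := hno
  have hn1 : n + 1 = 2 * (k + 1) := by omega
  have : (aCl n + bCl n) ^ (n + 1) = ((aCl n + bCl n) ^ 2) ^ (k + 1) := by
    rw [← pow_mul, ← hn1]
  rw [this, ab_sq, ← pow_mul, ← hn1, a_pow]

lemma hom_ext {n : ℕ} {S : Type*} [Semiring S] (f g : PSRing n →+* S)
    (ha : f (aCl n) = g (aCl n)) (hb : f (bCl n) = g (bCl n)) : f = g := by
  apply Ideal.Quotient.ringHom_ext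
  apply MvPolynomial.ringHom_ext
  · intro r
    have : r = 0 ∨ r = 1 := by revert r; decide
    rcases this with rfl | rfl <;> simp
  · intro i
    fin_cases i
    · exact ha
    · exact hb

end PSAux

namespace PSAux

noncomputable def psi0 (n : ℕ) : MvPolynomial (Fin 2) (ZMod 2) →ₐ[ZMod 2] PSRing n :=
  aeval ![aCl n + bCl n, bCl n]

lemma psi0_X0 (n : ℕ) : psi0 n (X 0) = aCl n + bCl n := by simp [psi0]
lemma psi0_X1 (n : ℕ) : psi0 n (X 1) = bCl n := by simp [psi0]

noncomputable def psiHom (n : ℕ) (hno : Odd n) : PSRing n →+* PSRing n :=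
  Ideal.Quotient.lift (PI n) (psi0 n).toRingHom (by
    intro p hp
    have hker : PI n ≤ RingHom.ker (psi0 n).toRingHom := by
      rw [PI, Ideal.span_le]
      rintro q hq
      simp only [Set.mem_insert_iff, Set.mem_singleton_iff] at hq
      rcases hq with rfl | rfl <;>
        simp [RingHom.mem_ker, map_pow, psi0_X0, psi0_X1, ab_pow n hno, b_sq n]
    exact hker hp)

lemma psiHom_a (n : ℕ) (hno : Odd n) : psiHom n hno (aCl n) = aCl n + bCl n := by
  show psiHom n hno (Ideal.Quotient.mk (PI n) (X 0)) = _
  exact psi0_X0 n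

lemma psiHom_b (n : ℕ) (hno : Odd n) : psiHom n hno (bCl n) = bCl n := by
  show psiHom n hno (Ideal.Quotient.mk (PI n) (X 1)) = _
  exact psi0_X1 n

lemma b_add_b (n : ℕ) : bCl n + bCl n = 0 := by
  have : bCl n + bCl n = 2 * bCl n := by ring
  rw [this, two_zero, zero_mul]

lemma psiHom_invol (n : ℕ) (hno : Odd n) :
    (psiHom n hno).comp (psiHom n hno) = RingHom.id (PSRing n) := by
  apply hom_ext
  · rw [RingHom.comp_apply, psiHom_a, (psiHom n hno).map_add, psiHom_a, psiHom_b, RingHom.id_apply,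
      add_assoc, b_add_b, add_zero]
  · rw [RingHom.comp_apply, psiHom_b, psiHom_b, RingHom.id_apply]

noncomputable def psiEquiv (n : ℕ) (hno : Odd n) : PSRing n ≃+* PSRing n :=
  RingEquiv.ofRingHom (psiHom n hno) (psiHom n hno) (psiHom_invol n hno) (psiHom_invol n hno)

end PSAux

namespace PSAux

noncomputable abbrev QA (n : ℕ) : Type :=
  Polynomial (ZMod 2) ⧸ Ideal.span {(Polynomial.X : Polynomial (ZMod 2)) ^ (n + 1)}

noncomputable abbrev qmk (n : ℕ) : Polynomial (ZMod 2) →+* QA n :=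
  Ideal.Quotient.mk _

lemma qmk_ne_zero (n : ℕ) (p : Polynomial (ZMod 2)) (d : ℕ) (hd : d < n + 1)
    (hc : p.coeff d ≠ 0) : qmk n p ≠ 0 := by
  intro h
  rw [Ideal.Quotient.eq_zero_iff_mem, Ideal.mem_span_singleton] at h
  exact hc (Polynomial.X_pow_dvd_iff.mp h d hd)

noncomputable def ev0 (n : ℕ) : MvPolynomial (Fin 2) (ZMod 2) →ₐ[ZMod 2] QA n :=
  aeval ![qmk n Polynomial.X, qmk n (Polynomial.X ^ n)]

lemma ev0_X0 (n : ℕ) : ev0 n (X 0) = qmk n Polynomial.X := by simp [ev0]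
lemma ev0_X1 (n : ℕ) : ev0 n (X 1) = qmk n (Polynomial.X ^ n) := by simp [ev0]

noncomputable def ev (n : ℕ) (hn : 1 ≤ n) : PSRing n →+* QA n :=
  Ideal.Quotient.lift (PI n) (ev0 n).toRingHom (by
    intro p hp
    have hker : PI n ≤ RingHom.ker (ev0 n).toRingHom := by
      rw [PI, Ideal.span_le]
      rintro q hq
      simp only [Set.mem_insert_iff, Set.mem_singleton_iff] at hq
      have hmem : ∀ r : Polynomial (ZMod 2),
          (Polynomial.X : Polynomial (ZMod 2)) ^ (n + 1) ∣ r → qmk n r = 0 := by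
        intro r hr
        rw [Ideal.Quotient.eq_zero_iff_mem, Ideal.mem_span_singleton]
        exact hr
      rcases hq with rfl | rfl
      · simp only [SetLike.mem_coe, RingHom.mem_ker, AlgHom.toRingHom_eq_coe, RingHom.coe_coe,
          map_pow, ev0_X0]
        rw [← (qmk n).map_pow]
        exact hmem _ dvd_rfl
      · simp only [SetLike.mem_coe, RingHom.mem_ker, AlgHom.toRingHom_eq_coe, RingHom.coe_coe,
          map_pow, ev0_X1]
        rw [← pow_mul, ← (qmk n).map_pow]
        exact hmem _ (pow_dvd_pow _ (by omega))
    exact hker hp)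

lemma ev_a (n : ℕ) (hn : 1 ≤ n) : ev n hn (aCl n) = qmk n Polynomial.X := ev0_X0 n
lemma ev_b (n : ℕ) (hn : 1 ≤ n) : ev n hn (bCl n) = qmk n (Polynomial.X ^ n) := ev0_X1 n

lemma coeff_X_pow' (k d : ℕ) :
    ((Polynomial.X : Polynomial (ZMod 2)) ^ k).coeff d = if d = k then 1 else 0 :=
  Polynomial.coeff_X_pow k d

lemma b_ne (n : ℕ) (hn : 1 ≤ n) : bCl n ≠ 0 := by
  intro h
  have := congrArg (ev n hn) h
  rw [ev_b, map_zero] at this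
  exact qmk_ne_zero n _ n (by omega) (by rw [coeff_X_pow']; simp) this

lemma a_ne (n : ℕ) (hn : 1 ≤ n) : aCl n ≠ 0 := by
  intro h
  have := congrArg (ev n hn) h
  rw [ev_a, map_zero] at this
  refine qmk_ne_zero n _ 1 (by omega) ?_ this
  simp

lemma a_sq_ne (n : ℕ) (hn : 2 ≤ n) : aCl n ^ 2 ≠ 0 := by
  intro h
  have := congrArg (ev n (by omega)) h
  rw [map_pow, ev_a, ← map_pow, map_zero] at this
  refine qmk_ne_zero n _ 2 (by omega) ?_ this
  rw [coeff_X_pow']; simp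

lemma a_ne_b (n : ℕ) (hn : 2 ≤ n) : aCl n ≠ bCl n := by
  intro h
  have hn1 : 1 ≤ n := by omega
  have := congrArg (ev n hn1) h
  rw [ev_a, ev_b] at this
  have h0 : qmk n (Polynomial.X - Polynomial.X ^ n) = 0 := by
    rw [(qmk n).map_sub, this, sub_self]
  refine qmk_ne_zero n _ 1 (by omega) ?_ h0
  rw [Polynomial.coeff_sub, Polynomial.coeff_X_one, coeff_X_pow']
  simp only [if_neg (by omega : ¬ (1 = n))]
  decide

lemma ab_ne_zero (n : ℕ) (hn : 2 ≤ n) : aCl n + bCl n ≠ 0 := by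
  intro h
  have hn1 : 1 ≤ n := by omega
  have := congrArg (ev n hn1) h
  rw [(ev n hn1).map_add, ev_a, ev_b, ← (qmk n).map_add, (ev n hn1).map_zero] at this
  refine qmk_ne_zero n _ 1 (by omega) ?_ this
  rw [Polynomial.coeff_add, Polynomial.coeff_X_one, coeff_X_pow']
  simp only [if_neg (by omega : ¬ (1 = n))]
  decide

end PSAux

namespace PSAux

noncomputable def toLin {n : ℕ} (f : PSRing n →+* PSRing n) :
    PSRing n →ₗ[ZMod 2] PSRing n where
  toFun := f
  map_add' := f.map_add
  map_smul' := by
    intro c x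
    have hc : c = 0 ∨ c = 1 := by revert c; decide
    rcases hc with rfl | rfl <;> simp

lemma psi_maps_piece (n m : ℕ) (hno : Odd n) (k : ℕ) :
    psiHom n hno '' psPiece n m k ⊆ psPiece n m k := by
  rw [psPiece, show (psiHom n hno : PSRing n → PSRing n)
      = (toLin (psiHom n hno) : PSRing n → PSRing n) from rfl,
    ← Submodule.map_coe, Submodule.map_span]
  intro x hx
  refine Submodule.span_le.mpr ?_ hx
  rintro y ⟨r, ⟨i, j, hij, rfl⟩, rfl⟩
  have hr : toLin (psiHom n hno) (aCl n ^ i * bCl n ^ j)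
      = (aCl n + bCl n) ^ i * bCl n ^ j := by
    show psiHom n hno (aCl n ^ i * bCl n ^ j) = _
    rw [(psiHom n hno).map_mul, (psiHom n hno).map_pow, (psiHom n hno).map_pow,
      psiHom_a, psiHom_b]
  rw [hr, add_pow]
  rw [Finset.sum_mul]
  apply Submodule.sum_mem
  intro l hl
  have hl' : l ≤ i := by
    simp only [Finset.mem_range] at hl; omega
  have : aCl n ^ l * bCl n ^ (i - l) * (i.choose l : PSRing n) * bCl n ^ j
      = (i.choose l) • (aCl n ^ l * bCl n ^ (i - l + j)) := by
    rw [nsmul_eq_mul]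
    ring
  rw [this]
  refine nsmul_mem (Submodule.subset_span ?_) _
  exact ⟨l, i - l + j, by rw [show l + (i - l + j) = i + j by omega]; exact hij, rfl⟩

lemma psi_graded (n m : ℕ) (hno : Odd n) (k : ℕ) :
    psiHom n hno '' psPiece n m k = psPiece n m k := by
  apply Set.Subset.antisymm (psi_maps_piece n m hno k)
  intro x hx
  refine ⟨psiHom n hno x, psi_maps_piece n m hno k ⟨x, hx, rfl⟩, ?_⟩
  have := congrArg (fun f : PSRing n →+* PSRing n => f x) (psiHom_invol n hno)
  exact this

end PSAux

namespace PSAux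

lemma piece_m (n m : ℕ) (hm : 1 ≤ m) :
    psPiece n m m = {0, aCl n, bCl n, aCl n + bCl n} := by
  have hset : {r : PSRing n | ∃ i j : ℕ, m * (i + j) = m ∧ r = aCl n ^ i * bCl n ^ j}
      = {aCl n, bCl n} := by
    ext r
    constructor
    · rintro ⟨i, j, hij, rfl⟩
      have h1 : i + j = 1 := by
        have := Nat.eq_of_mul_eq_mul_left (show 0 < m by omega)
          (show m * (i + j) = m * 1 by omega)
        omega
      have : (i = 1 ∧ j = 0) ∨ (i = 0 ∧ j = 1) := by omega
      rcases this with ⟨rfl, rfl⟩ | ⟨rfl, rfl⟩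
      · left; simp
      · right; simp
    · rintro (rfl | rfl)
      · exact ⟨1, 0, by omega, by simp⟩
      · exact ⟨0, 1, by omega, by simp⟩
  rw [psPiece, hset]
  ext x
  simp only [SetLike.mem_coe, Submodule.mem_span_pair]
  constructor
  · rintro ⟨c, d, rfl⟩
    have hc : c = 0 ∨ c = 1 := by revert c; decide
    have hd : d = 0 ∨ d = 1 := by revert d; decide
    rcases hc with rfl | rfl <;> rcases hd with rfl | rfl <;>
      simp [Set.mem_insert_iff]
  · rintro h
    simp only [Set.mem_insert_iff, Set.mem_singleton_iff] at h
    rcases h with rfl | rfl | rfl | rfl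
    · exact ⟨0, 0, by simp⟩
    · exact ⟨1, 0, by simp⟩
    · exact ⟨0, 1, by simp⟩
    · exact ⟨1, 1, by simp⟩

end PSAux

/-- Let `n ≥ 3` be odd and grade `R = Z₂[a,b]/(a^{n+1}, b²)` by
`deg a = deg b = m` (`m ≥ 1`).  Then `R` has exactly two degree-preserving `ℤ₂`-algebra
automorphisms: the identity, and the automorphism determined by `a ↦ a + b`,
`b ↦ b`. -/
theorem gradedAut_classification_of_odd (n m : ℕ) (hn : 3 ≤ n) (hno : Odd n)
    (hm : 1 ≤ m) :
    ∃ ψ : PSRing n ≃+* PSRing n,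
      IsGradedAut n m ψ ∧
      ψ (aCl n) = aCl n + bCl n ∧
      ψ (bCl n) = bCl n ∧
      ψ ≠ RingEquiv.refl (PSRing n) ∧
      ∀ φ : PSRing n ≃+* PSRing n, IsGradedAut n m φ →
        φ = RingEquiv.refl (PSRing n) ∨ φ = ψ := by
  classical
  obtain ⟨ψ, hψfun⟩ : ∃ ψ : PSRing n ≃+* PSRing n,
      (ψ : PSRing n → PSRing n) = PSAux.psiHom n hno :=
    ⟨PSAux.psiEquiv n hno, rfl⟩
  have hb0 : bCl n ≠ 0 := PSAux.b_ne n (by omega)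
  have ha0 : aCl n ≠ 0 := PSAux.a_ne n (by omega)
  have hasq : aCl n ^ 2 ≠ 0 := PSAux.a_sq_ne n (by omega)
  have habsq : (aCl n + bCl n) ^ 2 ≠ 0 := by rw [PSAux.ab_sq]; exact hasq
  have hab : aCl n ≠ bCl n := PSAux.a_ne_b n (by omega)
  refine ⟨ψ, ?_, ?_, ?_, ?_, ?_⟩
  · intro k
    rw [hψfun]
    exact PSAux.psi_graded n m hno k
  · rw [hψfun]; exact PSAux.psiHom_a n hno
  · rw [hψfun]; exact PSAux.psiHom_b n hno
  · intro h
    have : ψ (aCl n) = aCl n := by rw [h]; rfl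
    rw [hψfun, PSAux.psiHom_a] at this
    exact hb0 (by rwa [add_eq_left] at this)
  · intro φ hφ
    have hP := hφ m
    rw [PSAux.piece_m n m hm] at hP
    have hbmem : bCl n ∈ ({0, aCl n, bCl n, aCl n + bCl n} : Set (PSRing n)) := by simp
    have hamem : aCl n ∈ ({0, aCl n, bCl n, aCl n + bCl n} : Set (PSRing n)) := by simp
    have hbP : φ (bCl n) ∈ ({0, aCl n, bCl n, aCl n + bCl n} : Set (PSRing n)) := by
      rw [← hP]; exact Set.mem_image_of_mem φ hbmem
    have haP : φ (aCl n) ∈ ({0, aCl n, bCl n, aCl n + bCl n} : Set (PSRing n)) := by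
      rw [← hP]; exact Set.mem_image_of_mem φ hamem
    have hinj : Function.Injective φ := φ.injective
    have hφb2 : (φ (bCl n)) ^ 2 = 0 := by rw [← map_pow, PSAux.b_sq, map_zero]
    have hφb : φ (bCl n) = bCl n := by
      simp only [Set.mem_insert_iff, Set.mem_singleton_iff] at hbP
      rcases hbP with h | h | h | h
      · exact absurd (hinj (by rw [h, map_zero])) hb0
      · rw [h] at hφb2; exact absurd hφb2 hasq
      · exact h
      · rw [h] at hφb2; exact absurd hφb2 habsq
    simp only [Set.mem_insert_iff, Set.mem_singleton_iff] at haP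
    rcases haP with h | h | h | h
    · exact absurd (hinj (by rw [h, map_zero])) ha0
    · left
      have heq : φ.toRingHom = RingHom.id (PSRing n) :=
        PSAux.hom_ext _ _ h hφb
      exact RingEquiv.ext fun x => DFunLike.congr_fun heq x
    · exact absurd (hinj (by rw [h, hφb])) hab
    · right
      have heq : φ.toRingHom = (PSAux.psiHom n hno : PSRing n →+* PSRing n) := by
        apply PSAux.hom_ext
        · rw [PSAux.psiHom_a]; exact h
        · rw [PSAux.psiHom_b]; exact hφb
      refine RingEquiv.ext fun x => ?_
      rw [hψfun]
      exact DFunLike.congr_fun heq x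
end
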